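/- Let L_i, H_i, G_i⁺, G_i⁻ (i ∈ ℤ) be the operators of RA_{0,−1} on V, i.e. L_i x_j = −(i + j)·x_{i+j}, L_i y_j = −(i/2 + j)·y_{i+j}, H_i x_j = 0, H_i y_j = y_{i+j}, G_i⁻ x_j = 0, G_i⁺ y_j = 0, G_i⁺ x_j = y_{i+j}, G_i⁻ y_j = −2(i + j)·x_{i+j}. Then the ℂ-subspace W of V spanned by {x_k : k ∈ ℤ, k ≠ 0} ∪ {y_j : j ∈ ℤ} is a proper nonzero subspace invariant under every L_i, H_i, G_i⁺, and G_i⁻ (i ∈ ℤ). In particular, the module RA_{0,−1} of the Ramond N=2 superconformal algebra is reducible. -/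
import Mathlib


noncomputable section

/-- The underlying space of the intermediate-series modules: two copies of `ℤ →₀ ℂ`. -/
abbrev V : Type := (ℤ →₀ ℂ) × (ℤ →₀ ℂ)

/-- The basis vectors `x j`. -/
def x (j : ℤ) : V := (Finsupp.single j 1, 0)

/-- The basis vectors `y j`. -/
def y (j : ℤ) : V := (0, Finsupp.single j 1)

/-- The subspace of `V` spanned by `{x k : k ≠ 0} ∪ {y j : j ∈ ℤ}`. -/
def W : Submodule ℂ V := Submodule.span ℂ ((x '' {k : ℤ | k ≠ 0}) ∪ Set.range y)

lemma xW (k : ℤ) (hk : k ≠ 0) : x k ∈ W :=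
  Submodule.subset_span (Or.inl ⟨k, hk, rfl⟩)

lemma yW (j : ℤ) : y j ∈ W :=
  Submodule.subset_span (Or.inr ⟨j, rfl⟩)

lemma smulxW (c : ℂ) (i j : ℤ) (hc : i + j = 0 → c = 0) :
    c • x (i + j) ∈ W := by
  by_cases h : i + j = 0
  · simp [hc h]
  · exact W.smul_mem _ (xW _ h)

theorem stmt_19 (L H Gp Gm : ℤ → (V →ₗ[ℂ] V))
    -- the operators of RA_{0,-1}
    (hLx : ∀ i j : ℤ, L i (x j) = (-((i : ℂ) + (j : ℂ))) • x (i + j))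
    (hLy : ∀ i j : ℤ, L i (y j) = (-((i : ℂ) / 2 + (j : ℂ))) • y (i + j))
    (hHx : ∀ i j : ℤ, H i (x j) = 0)
    (hHy : ∀ i j : ℤ, H i (y j) = y (i + j))
    (hGmx : ∀ i j : ℤ, Gm i (x j) = 0)
    (hGpy : ∀ i j : ℤ, Gp i (y j) = 0)
    (hGpx : ∀ i j : ℤ, Gp i (x j) = y (i + j))
    (hGmy : ∀ i j : ℤ, Gm i (y j) = (-(2 * ((i : ℂ) + (j : ℂ)))) • x (i + j)) :
    W ≠ ⊥ ∧ W ≠ ⊤ ∧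
      (∀ i : ℤ, ∀ v ∈ W, L i v ∈ W) ∧
      (∀ i : ℤ, ∀ v ∈ W, H i v ∈ W) ∧
      (∀ i : ℤ, ∀ v ∈ W, Gp i v ∈ W) ∧
      (∀ i : ℤ, ∀ v ∈ W, Gm i v ∈ W) := by
  -- generic invariance principle
  have inv : ∀ (T : V →ₗ[ℂ] V),
      (∀ k : ℤ, k ≠ 0 → T (x k) ∈ W) → (∀ j : ℤ, T (y j) ∈ W) →
      ∀ v ∈ W, T v ∈ W := by
    intro T hx hy v hv
    have hle : Submodule.span ℂ ((x '' {k : ℤ | k ≠ 0}) ∪ Set.range y) ≤ W.comap T := by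
      apply Submodule.span_le.2
      rintro s (⟨k, hk, rfl⟩ | ⟨j, rfl⟩)
      · exact hx k hk
      · exact hy j
    exact hle hv
  refine ⟨?_, ?_, ?_, ?_, ?_, ?_⟩
  · intro h
    have h0 : y 0 ∈ (⊥ : Submodule ℂ V) := h ▸ yW 0
    simp only [Submodule.mem_bot] at h0
    have h2 : (Finsupp.single (0:ℤ) (1:ℂ)) = 0 := congrArg Prod.snd h0
    rw [Finsupp.single_eq_zero] at h2
    exact one_ne_zero h2
  · intro h
    -- the functional evaluating the first component at 0 kills W but not x 0
    set f : V →ₗ[ℂ] ℂ := (Finsupp.lapply 0).comp (LinearMap.fst ℂ (ℤ →₀ ℂ) (ℤ →₀ ℂ)) with hf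
    have hker : W ≤ LinearMap.ker f := by
      apply Submodule.span_le.2
      rintro s (⟨k, hk, rfl⟩ | ⟨j, rfl⟩)
      · have hk' : k ≠ 0 := hk
        simp [f, x, LinearMap.mem_ker, Finsupp.single_apply, hk']
      · simp [f, y, LinearMap.mem_ker]
    have hx0 : x 0 ∈ W := h ▸ Submodule.mem_top
    have hf0 := hker hx0
    rw [LinearMap.mem_ker] at hf0
    simp only [f, LinearMap.comp_apply, LinearMap.fst_apply, Finsupp.lapply_apply, x,
      Finsupp.single_eq_same] at hf0
    exact one_ne_zero hf0
  · intro i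
    refine inv (L i) (fun k hk => ?_) (fun j => ?_)
    · rw [hLx]
      refine smulxW _ i k (fun h => ?_)
      have : ((i + k : ℤ) : ℂ) = 0 := by rw [h]; simp
      push_cast at this
      rw [this]; ring
    · rw [hLy]; exact W.smul_mem _ (yW _)
  · intro i
    refine inv (H i) (fun k hk => ?_) (fun j => ?_)
    · rw [hHx]; exact W.zero_mem
    · rw [hHy]; exact yW _
  · intro i
    refine inv (Gp i) (fun k hk => ?_) (fun j => ?_)
    · rw [hGpx]; exact yW _
    · rw [hGpy]; exact W.zero_mem
  · intro i
    refine inv (Gm i) (fun k hk => ?_) (fun j => ?_)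
    · rw [hGmx]; exact W.zero_mem
    · rw [hGmy]
      refine smulxW _ i j (fun h => ?_)
      have : ((i + j : ℤ) : ℂ) = 0 := by rw [h]; simp
      push_cast at this
      rw [this]; ring
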